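/- Let H be a real symmetric d×d matrix whose largest eigenvalue λ satisfies λ ≥ 0, let v be a unit eigenvector of H with eigenvalue λ, let α, β ≥ 0 and η > 0, and let g be a square-integrable ℝ^d-valued random vector with E[⟨v, g⟩²] ≥ η. Then for every integer p ≥ 0, E‖(I + αH)^p (β g)‖² ≥ η β² (1 + αλ)^{2p}. -/

import Mathlib

open MeasureTheory Matrix

/-- Geometric growth of the displacement along the top eigenvector
direction under the correlated negative curvature (CNC) condition:
`E‖(I + αH)^p (βg)‖² ≥ ηβ²(1 + αλ)^{2p}`. -/
theorem cnc_geometric_growth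
    {d : ℕ}
    {Ω : Type*} {mΩ : MeasurableSpace Ω} (μ : Measure Ω) [IsProbabilityMeasure μ]
    (H : Matrix (Fin d) (Fin d) ℝ) (hH : H.IsSymm)
    (lam : ℝ) (hlam : 0 ≤ lam)
    (v : EuclideanSpace ℝ (Fin d)) (hv : ‖v‖ = 1)
    (heig : Matrix.toEuclideanLin H v = lam • v)
    (hmax : ∀ (c : ℝ) (w : EuclideanSpace ℝ (Fin d)),
      w ≠ 0 → Matrix.toEuclideanLin H w = c • w → c ≤ lam)
    (α β η : ℝ) (hα : 0 ≤ α) (hβ : 0 ≤ β) (hη : 0 < η)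
    (g : Ω → EuclideanSpace ℝ (Fin d)) (hg : MemLp g 2 μ)
    (hCNC : η ≤ ∫ ω, (inner ℝ v (g ω) : ℝ) ^ 2 ∂μ) :
    ∀ p : ℕ,
      η * β ^ 2 * (1 + α * lam) ^ (2 * p) ≤
        ∫ ω, ‖Matrix.toEuclideanLin ((1 + α • H) ^ p) (β • g ω)‖ ^ 2 ∂μ := by
  intro p
  set A : Matrix (Fin d) (Fin d) ℝ := (1 + α • H) ^ p with hA
  have hmul : ∀ (M N : Matrix (Fin d) (Fin d) ℝ) (x : EuclideanSpace ℝ (Fin d)),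
      Matrix.toEuclideanLin (M * N) x
        = Matrix.toEuclideanLin M (Matrix.toEuclideanLin N x) := by
    intro M N x
    simp [Matrix.toEuclideanLin_apply, ← Matrix.mulVec_mulVec]
  have h1v : Matrix.toEuclideanLin (1 : Matrix (Fin d) (Fin d) ℝ) v = v := by
    simp [Matrix.toEuclideanLin_apply, Matrix.one_mulVec]
  -- v is an eigenvector of A with eigenvalue (1 + α*lam)^p
  have heigA : Matrix.toEuclideanLin A v = ((1 + α * lam) ^ p) • v := by
    have hstep : Matrix.toEuclideanLin (1 + α • H) v = (1 + α * lam) • v := by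
      have h2 : Matrix.toEuclideanLin (α • H) v = (α * lam) • v := by
        rw [LinearEquiv.map_smul]
        simp only [LinearMap.smul_apply, heig, smul_smul]
      rw [map_add]
      simp only [LinearMap.add_apply, h1v, h2, add_smul, one_smul]
    clear_value A
    subst hA
    induction p with
    | zero => simpa using h1v
    | succ n ih =>
      rw [pow_succ, hmul]
      simp only [hstep, LinearMap.map_smul, ih, smul_smul, pow_succ]
      ring_nf
  -- A is Hermitian
  have hHH : H.IsHermitian := by
    unfold Matrix.IsHermitian; rw [Matrix.conjTranspose_eq_transpose_of_trivial]; exact hH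
  have hsmul : (α • H).IsHermitian := by
    simp [Matrix.IsHermitian, Matrix.conjTranspose_smul, show Hᵀ = H from hH]
  have hHerm : A.IsHermitian :=
    Matrix.IsHermitian.pow ((Matrix.isHermitian_one).add hsmul) p
  have hsym : A.toEuclideanLin.IsSymmetric :=
    (Matrix.isHermitian_iff_isSymmetric).mp hHerm
  have hcpos : (0:ℝ) ≤ (1 + α * lam) ^ p :=
    pow_nonneg (by positivity) p
  -- pointwise bound
  have hpt : ∀ ω, (β * (1 + α * lam) ^ p) ^ 2 * (inner ℝ v (g ω) : ℝ) ^ 2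
      ≤ ‖Matrix.toEuclideanLin A (β • g ω)‖ ^ 2 := by
    intro ω
    have hinner : (inner ℝ v (Matrix.toEuclideanLin A (β • g ω)) : ℝ)
        = (β * (1 + α * lam) ^ p) * (inner ℝ v (g ω) : ℝ) := by
      rw [← hsym v (β • g ω), heigA, inner_smul_left, inner_smul_right]
      simp only [conj_trivial]
      ring
    have hcs : |(inner ℝ v (Matrix.toEuclideanLin A (β • g ω)) : ℝ)|
        ≤ ‖v‖ * ‖Matrix.toEuclideanLin A (β • g ω)‖ := abs_real_inner_le_norm _ _
    rw [hv, one_mul] at hcs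
    calc (β * (1 + α * lam) ^ p) ^ 2 * (inner ℝ v (g ω) : ℝ) ^ 2
        = ((β * (1 + α * lam) ^ p) * (inner ℝ v (g ω) : ℝ)) ^ 2 := by ring
      _ = |(inner ℝ v (Matrix.toEuclideanLin A (β • g ω)) : ℝ)| ^ 2 := by
          rw [← hinner, sq_abs]
      _ ≤ ‖Matrix.toEuclideanLin A (β • g ω)‖ ^ 2 := by
          exact pow_le_pow_left₀ (abs_nonneg _) hcs 2
  -- integrability of both sides
  have hgβ : MemLp (fun ω => β • g ω) 2 μ := hg.const_smul β
  have hAg : MemLp (fun ω => Matrix.toEuclideanLin A (β • g ω)) 2 μ := by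
    have h := (Matrix.toEuclideanCLM (𝕜 := ℝ) (n := Fin d) A).comp_memLp' hgβ
    have he : (fun ω => Matrix.toEuclideanLin A (β • g ω))
        = (Matrix.toEuclideanCLM (𝕜 := ℝ) (n := Fin d) A) ∘ (fun ω => β • g ω) := by
      funext ω
      have := congrFun (congrArg (fun (L : EuclideanSpace ℝ (Fin d) →ₗ[ℝ] EuclideanSpace ℝ (Fin d)) => (L : EuclideanSpace ℝ (Fin d) → EuclideanSpace ℝ (Fin d))) (Matrix.coe_toEuclideanCLM_eq_toEuclideanLin (𝕜 := ℝ) A)) (β • g ω)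
      exact this.symm
    rw [he]
    exact h
  have hintR : Integrable (fun ω => ‖Matrix.toEuclideanLin A (β • g ω)‖ ^ 2) μ := by
    have := hAg.norm.integrable_sq
    simpa using this
  have hintL : Integrable (fun ω => (inner ℝ v (g ω) : ℝ) ^ 2) μ := by
    have h1 : MemLp (fun ω => (inner ℝ v (g ω) : ℝ)) 2 μ := by
      have := (innerSL ℝ v).comp_memLp' hg
      exact this
    have := h1.integrable_sq
    simpa using this
  -- conclude
  have key : (β * (1 + α * lam) ^ p) ^ 2 * ∫ ω, (inner ℝ v (g ω) : ℝ) ^ 2 ∂μ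
      ≤ ∫ ω, ‖Matrix.toEuclideanLin A (β • g ω)‖ ^ 2 ∂μ := by
    rw [← integral_const_mul]
    exact integral_mono (hintL.const_mul _) hintR hpt
  have hηint : η * (β * (1 + α * lam) ^ p) ^ 2
      ≤ (β * (1 + α * lam) ^ p) ^ 2 * ∫ ω, (inner ℝ v (g ω) : ℝ) ^ 2 ∂μ := by
    rw [mul_comm]
    exact mul_le_mul_of_nonneg_left hCNC (sq_nonneg _)
  calc η * β ^ 2 * (1 + α * lam) ^ (2 * p)
      = η * (β * (1 + α * lam) ^ p) ^ 2 := by rw [pow_mul']; ring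
    _ ≤ _ := hηint.trans key
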